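/- arXiv:2412.08321 — 2 statements merged into one kernel-verified Lean document; each statement's English description precedes it below -/
import Mathlib

section
/- Let (X, d) be a metric space, p ≥ 1 a real number, and c > 0. Define D on X ∪ {∅} (i.e., on Option X) by: D(∅, ∅) = 0; D(x, y) = min(c, d(x, y)) for x, y ∈ X; and D(x, ∅) = D(∅, y) = c / 2^{1/p} for x, y ∈ X. Then D is a metric on X ∪ {∅}. -/
/-- The GOSPA-type base distance `d_p^{(c)}` on `X ∪ {∅}` (modeled by `Option X`):
`0` when both elements are absent, the cut-off distance `min c (dist x y)` when
both are present, and `c / 2^{1/p}` when exactly one is present. -/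
noncomputable def gospaBase {X : Type*} [MetricSpace X] (p c : ℝ) :
    Option X → Option X → ℝ
  | none, none => 0
  | some x, some y => min c (dist x y)
  | some _, none => c / (2 : ℝ) ^ (1 / p)
  | none, some _ => c / (2 : ℝ) ^ (1 / p)

/-- The GOSPA base distance is a metric on `X ∪ {∅}`. -/
theorem gospaBase_is_metric {X : Type*} [MetricSpace X] (p c : ℝ)
    (hp : 1 ≤ p) (hc : 0 < c) :
    (∀ a b : Option X, 0 ≤ gospaBase p c a b) ∧
    (∀ a b : Option X, gospaBase p c a b = gospaBase p c b a) ∧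
    (∀ a b : Option X, gospaBase p c a b = 0 ↔ a = b) ∧
    (∀ a b d : Option X,
      gospaBase p c a d ≤ gospaBase p c a b + gospaBase p c b d) := by
  have hp0 : (0:ℝ) < p := lt_of_lt_of_le one_pos hp
  have hpow_pos : (0:ℝ) < (2:ℝ) ^ (1 / p) := Real.rpow_pos_of_pos two_pos _
  have he : (0:ℝ) < c / (2:ℝ) ^ (1 / p) := div_pos hc hpow_pos
  have hpow_le : (2:ℝ) ^ (1 / p) ≤ 2 := by
    calc (2:ℝ) ^ (1 / p) ≤ (2:ℝ) ^ (1:ℝ) :=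
          Real.rpow_le_rpow_of_exponent_le one_le_two
            (by rw [div_le_one hp0]; exact hp)
      _ = 2 := Real.rpow_one 2
  have hc2 : c ≤ c / (2:ℝ) ^ (1 / p) + c / (2:ℝ) ^ (1 / p) := by
    rw [← add_div, le_div_iff₀ hpow_pos]
    nlinarith
  have hmin_nonneg : ∀ x y : X, 0 ≤ min c (dist x y) := fun x y =>
    le_min hc.le dist_nonneg
  have htri : ∀ x y z : X,
      min c (dist x z) ≤ min c (dist x y) + min c (dist y z) := by
    intro x y z
    rcases le_total c (dist x y) with h1 | h1
    · rw [min_eq_left h1]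
      have := hmin_nonneg y z
      have := min_le_left c (dist x z)
      linarith
    · rcases le_total c (dist y z) with h2 | h2
      · rw [min_eq_left h2]
        have := hmin_nonneg x y
        have := min_le_left c (dist x z)
        linarith
      · rw [min_eq_right h1, min_eq_right h2]
        exact le_trans (min_le_right _ _) (dist_triangle x y z)
  refine ⟨?_, ?_, ?_, ?_⟩
  · rintro (_|x) (_|y)
    · exact le_refl 0
    · exact he.le
    · exact he.le
    · exact hmin_nonneg x y
  · rintro (_|x) (_|y) <;> simp [gospaBase, min_comm, dist_comm]
  · rintro (_|x) (_|y)
    · simp [gospaBase]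
    · simpa [gospaBase] using he.ne'
    · simpa [gospaBase] using he.ne'
    · show min c (dist x y) = 0 ↔ _
      constructor
      · intro h
        rcases min_eq_iff.mp h with ⟨h', -⟩ | ⟨h', -⟩
        · exact absurd h' hc.ne'
        · simpa using dist_eq_zero.mp h'
      · rintro h
        injection h with h
        subst h
        simp [hc.le]
  · rintro (_|x) (_|y) (_|z) <;> simp only [gospaBase]
    · norm_num
    · linarith
    · exact add_nonneg he.le he.le
    · have := hmin_nonneg y z; linarith
    · linarith
    · exact le_trans (min_le_left _ _) hc2
    · have := hmin_nonneg x y; linarith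
    · exact htri x y z
end

section
/- Equip ℝ² = ℝ × ℝ with the supremum (maximum) metric. For axis-aligned bounding boxes x = [ℓ₁, r₁] × [ℓ₂, r₂] and y = [ℓ₁', r₁'] × [ℓ₂', r₂'] (with ℓᵢ ≤ rᵢ and ℓᵢ' ≤ rᵢ'), the Hausdorff distance between x and y equals max( max(|ℓ₁ − ℓ₁'|, |r₁ − r₁'|), max(|ℓ₂ − ℓ₂'|, |r₂ − r₂'|) ). -/
open Metric Set

private lemma clamp_mem' {l r : ℝ} (h : l ≤ r) (a : ℝ) :
    max l (min a r) ∈ Set.Icc l r :=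
  ⟨le_max_left _ _, max_le h (min_le_right _ _)⟩

private lemma clamp_dist' {l r l' r' : ℝ} (h' : l' ≤ r') {a : ℝ} (ha : a ∈ Set.Icc l r) :
    dist a (max l' (min a r')) ≤ max |l - l'| |r - r'| := by
  rw [Real.dist_eq]
  rcases le_or_gt a l' with h1 | h1
  · have he : max l' (min a r') = l' := by
      rw [max_eq_left]; exact le_trans (min_le_left _ _) h1
    rw [he]
    calc |a - l'| = l' - a := by rw [abs_of_nonpos (by linarith)]; ring
    _ ≤ l' - l := by linarith [ha.1]
    _ ≤ |l - l'| := by rw [abs_sub_comm]; exact le_abs_self _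
    _ ≤ _ := le_max_left _ _
  rcases le_or_gt a r' with h2 | h2
  · have he : max l' (min a r') = a := by
      rw [min_eq_left h2, max_eq_right h1.le]
    simp [he]
  · have he : max l' (min a r') = r' := by
      rw [min_eq_right h2.le, max_eq_right h']
    rw [he]
    calc |a - r'| = a - r' := abs_of_nonneg (by linarith)
    _ ≤ r - r' := by linarith [ha.2]
    _ ≤ |r - r'| := le_abs_self _
    _ ≤ _ := le_max_right _ _

private lemma le_infDist_aux {p : ℝ × ℝ} {S : Set (ℝ × ℝ)} {c : ℝ}
    (hS : S.Nonempty) (h : ∀ q ∈ S, c ≤ dist p q) : c ≤ Metric.infDist p S := by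
  rw [Metric.infDist_eq_iInf]
  haveI : Nonempty S := hS.to_subtype
  exact le_ciInf fun q => h q q.2

/-- Equip `ℝ² = ℝ × ℝ` with the supremum (maximum) metric (the product metric in
Mathlib). For axis-aligned bounding boxes `x = [ℓ₁,r₁] × [ℓ₂,r₂]` and
`y = [ℓ₁',r₁'] × [ℓ₂',r₂']`, the Hausdorff distance equals
`max (max |ℓ₁ − ℓ₁'| |r₁ − r₁'|) (max |ℓ₂ − ℓ₂'| |r₂ − r₂'|)`. -/
theorem hausdorffDist_boxes (l₁ r₁ l₂ r₂ l₁' r₁' l₂' r₂' : ℝ)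
    (h₁ : l₁ ≤ r₁) (h₂ : l₂ ≤ r₂) (h₁' : l₁' ≤ r₁') (h₂' : l₂' ≤ r₂') :
    Metric.hausdorffDist
        ((Set.Icc l₁ r₁ ×ˢ Set.Icc l₂ r₂ : Set (ℝ × ℝ)))
        ((Set.Icc l₁' r₁' ×ˢ Set.Icc l₂' r₂' : Set (ℝ × ℝ))) =
      max (max |l₁ - l₁'| |r₁ - r₁'|) (max |l₂ - l₂'| |r₂ - r₂'|) := by
  set X : Set (ℝ × ℝ) := Set.Icc l₁ r₁ ×ˢ Set.Icc l₂ r₂ with hX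
  set Y : Set (ℝ × ℝ) := Set.Icc l₁' r₁' ×ˢ Set.Icc l₂' r₂' with hY
  have hXne : X.Nonempty := ⟨(l₁, l₂), by simp [hX, h₁, h₂]⟩
  have hYne : Y.Nonempty := ⟨(l₁', l₂'), by simp [hY, h₁', h₂']⟩
  have hfin : EMetric.hausdorffEdist X Y ≠ ⊤ :=
    Metric.hausdorffEdist_ne_top_of_nonempty_of_bounded hXne hYne
      ((Metric.isBounded_Icc _ _).prod (Metric.isBounded_Icc _ _))
      ((Metric.isBounded_Icc _ _).prod (Metric.isBounded_Icc _ _))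
  have hfin' : EMetric.hausdorffEdist Y X ≠ ⊤ := by
    rw [show EMetric.hausdorffEdist Y X = Metric.hausdorffEDist X Y from Metric.hausdorffEDist_comm]; exact hfin
  -- membership unfolding helpers
  have memX : ∀ p : ℝ × ℝ, p ∈ X ↔ (l₁ ≤ p.1 ∧ p.1 ≤ r₁) ∧ l₂ ≤ p.2 ∧ p.2 ≤ r₂ := by
    intro p; simp [hX, Set.mem_prod, Set.mem_Icc, Prod.le_def]; tauto
  have memY : ∀ p : ℝ × ℝ, p ∈ Y ↔ (l₁' ≤ p.1 ∧ p.1 ≤ r₁') ∧ l₂' ≤ p.2 ∧ p.2 ≤ r₂' := by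
    intro p; simp [hY, Set.mem_prod, Set.mem_Icc, Prod.le_def]; tauto
  apply le_antisymm
  · -- upper bound
    apply Metric.hausdorffDist_le_of_mem_dist (by positivity)
    · intro p hp
      rw [memX] at hp
      refine ⟨(max l₁' (min p.1 r₁'), max l₂' (min p.2 r₂')), ?_, ?_⟩
      · rw [memY]
        exact ⟨clamp_mem' h₁' p.1, clamp_mem' h₂' p.2⟩
      · rw [Prod.dist_eq]
        exact max_le_max (clamp_dist' h₁' ⟨hp.1.1, hp.1.2⟩)
          (clamp_dist' h₂' ⟨hp.2.1, hp.2.2⟩)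
    · intro p hp
      rw [memY] at hp
      refine ⟨(max l₁ (min p.1 r₁), max l₂ (min p.2 r₂)), ?_, ?_⟩
      · rw [memX]
        exact ⟨clamp_mem' h₁ p.1, clamp_mem' h₂ p.2⟩
      · rw [Prod.dist_eq]
        calc max (dist p.1 (max l₁ (min p.1 r₁))) (dist p.2 (max l₂ (min p.2 r₂)))
            ≤ max (max |l₁' - l₁| |r₁' - r₁|) (max |l₂' - l₂| |r₂' - r₂|) :=
              max_le_max (clamp_dist' h₁ ⟨hp.1.1, hp.1.2⟩)
                (clamp_dist' h₂ ⟨hp.2.1, hp.2.2⟩)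
          _ = max (max |l₁ - l₁'| |r₁ - r₁'|) (max |l₂ - l₂'| |r₂ - r₂'|) := by
              rw [abs_sub_comm l₁', abs_sub_comm r₁', abs_sub_comm l₂', abs_sub_comm r₂']
  · -- lower bound
    have keyX : ∀ (p : ℝ × ℝ) (c : ℝ), p ∈ X → (∀ q ∈ Y, c ≤ dist p q) →
        c ≤ Metric.hausdorffDist X Y := fun p c hp h =>
      le_trans (le_infDist_aux hYne h) (Metric.infDist_le_hausdorffDist_of_mem hp hfin)
    have keyY : ∀ (p : ℝ × ℝ) (c : ℝ), p ∈ Y → (∀ q ∈ X, c ≤ dist p q) →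
        c ≤ Metric.hausdorffDist X Y := fun p c hp h => by
      rw [Metric.hausdorffDist_comm]
      exact le_trans (le_infDist_aux hXne h) (Metric.infDist_le_hausdorffDist_of_mem hp hfin')
    have dge1 : ∀ p q : ℝ × ℝ, |p.1 - q.1| ≤ dist p q := fun p q => by
      rw [Prod.dist_eq, Real.dist_eq]; exact le_max_left _ _
    have dge2 : ∀ p q : ℝ × ℝ, |p.2 - q.2| ≤ dist p q := fun p q => by
      rw [Prod.dist_eq, Real.dist_eq]; exact le_max_right _ _
    apply max_le <;> apply max_le
    · rw [abs_sub_le_iff]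
      constructor
      · refine keyY (l₁', l₂') _ (by rw [memY]; simp [h₁', h₂']) fun q hq => ?_
        rw [memX] at hq
        calc l₁ - l₁' ≤ q.1 - l₁' := by linarith [hq.1.1]
          _ ≤ |(l₁', l₂').1 - q.1| := by rw [abs_sub_comm]; exact le_abs_self _
          _ ≤ _ := dge1 _ _
      · refine keyX (l₁, l₂) _ (by rw [memX]; simp [h₁, h₂]) fun q hq => ?_
        rw [memY] at hq
        calc l₁' - l₁ ≤ q.1 - l₁ := by linarith [hq.1.1]
          _ ≤ |(l₁, l₂).1 - q.1| := by rw [abs_sub_comm]; exact le_abs_self _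
          _ ≤ _ := dge1 _ _
    · rw [abs_sub_le_iff]
      constructor
      · refine keyX (r₁, l₂) _ (by rw [memX]; simp [h₁, h₂]) fun q hq => ?_
        rw [memY] at hq
        calc r₁ - r₁' ≤ r₁ - q.1 := by linarith [hq.1.2]
          _ ≤ |(r₁, l₂).1 - q.1| := le_abs_self _
          _ ≤ _ := dge1 _ _
      · refine keyY (r₁', l₂') _ (by rw [memY]; simp [h₁', h₂']) fun q hq => ?_
        rw [memX] at hq
        calc r₁' - r₁ ≤ r₁' - q.1 := by linarith [hq.1.2]
          _ ≤ |(r₁', l₂').1 - q.1| := le_abs_self _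
          _ ≤ _ := dge1 _ _
    · rw [abs_sub_le_iff]
      constructor
      · refine keyY (l₁', l₂') _ (by rw [memY]; simp [h₁', h₂']) fun q hq => ?_
        rw [memX] at hq
        calc l₂ - l₂' ≤ q.2 - l₂' := by linarith [hq.2.1]
          _ ≤ |(l₁', l₂').2 - q.2| := by rw [abs_sub_comm]; exact le_abs_self _
          _ ≤ _ := dge2 _ _
      · refine keyX (l₁, l₂) _ (by rw [memX]; simp [h₁, h₂]) fun q hq => ?_
        rw [memY] at hq
        calc l₂' - l₂ ≤ q.2 - l₂ := by linarith [hq.2.1]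
          _ ≤ |(l₁, l₂).2 - q.2| := by rw [abs_sub_comm]; exact le_abs_self _
          _ ≤ _ := dge2 _ _
    · rw [abs_sub_le_iff]
      constructor
      · refine keyX (l₁, r₂) _ (by rw [memX]; simp [h₁, h₂]) fun q hq => ?_
        rw [memY] at hq
        calc r₂ - r₂' ≤ r₂ - q.2 := by linarith [hq.2.2]
          _ ≤ |(l₁, r₂).2 - q.2| := le_abs_self _
          _ ≤ _ := dge2 _ _
      · refine keyY (l₁', r₂') _ (by rw [memY]; simp [h₁', h₂']) fun q hq => ?_
        rw [memX] at hq
        calc r₂' - r₂ ≤ r₂' - q.2 := by linarith [hq.2.2]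
          _ ≤ |(l₁', r₂').2 - q.2| := le_abs_self _
          _ ≤ _ := dge2 _ _
end
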